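/- arXiv:2006.06342 — 2 statements merged into one kernel-verified Lean document; each statement's English description precedes it below -/
import Mathlib

section
/- For the N-qubit one-axis twisted state |ψ⟩ = exp(-iθ J_x²/2)|1⟩^{⊗N} (N ≥ 2), the single-spin expectation satisfies ⟨σ_z⟩ = -cos^{N-1}(θ/2), where J_x = (1/2)Σ_k σ_{k,x}. -/
open Matrix Complex Finset
open scoped Nat
set_option maxHeartbeats 1600000

noncomputable section OneAxisTwisting

/-- Pauli x matrix in the basis `{|0⟩, |1⟩}`. -/
def pauliX : Matrix (Fin 2) (Fin 2) ℂ := !![0, 1; 1, 0]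

/-- Pauli z matrix in the basis `{|0⟩, |1⟩}`. -/
def pauliZ : Matrix (Fin 2) (Fin 2) ℂ := !![1, 0; 0, -1]

/-- The single-qubit operator `m` acting on site `k` of `N` qubits (identity elsewhere),
as a matrix on the computational basis indexed by `Fin N → Fin 2`. -/
def siteOp (N : ℕ) (k : Fin N) (m : Matrix (Fin 2) (Fin 2) ℂ) :
    Matrix (Fin N → Fin 2) (Fin N → Fin 2) ℂ :=
  Matrix.of fun s t =>
    m (s k) (t k) * ∏ j ∈ Finset.univ.erase k, (if s j = t j then (1 : ℂ) else 0)

/-- The collective spin operator `J_x = (1/2) Σ_k σ_{k,x}`. -/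
def Jx (N : ℕ) : Matrix (Fin N → Fin 2) (Fin N → Fin 2) ℂ :=
  (1 / 2 : ℂ) • ∑ k : Fin N, siteOp N k pauliX

/-- The all-down state `|1⟩^{⊗N}` as a vector. -/
def allDown (N : ℕ) : (Fin N → Fin 2) → ℂ :=
  fun s => if s = (fun _ => 1) then 1 else 0

/-- The one-axis twisted state `exp(-iθ J_x²/2) |1⟩^{⊗N}`. -/
def oneAxisTwisted (N : ℕ) (θ : ℝ) : (Fin N → Fin 2) → ℂ :=
  (NormedSpace.exp ((-(θ / 2 : ℂ) * Complex.I) • (Jx N * Jx N))).mulVec (allDown N)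

/-- Expectation value `⟨ψ|O|ψ⟩` in the one-axis twisted state. -/
def expVal (N : ℕ) (θ : ℝ) (O : Matrix (Fin N → Fin 2) (Fin N → Fin 2) ℂ) : ℂ :=
  star (oneAxisTwisted N θ) ⬝ᵥ O.mulVec (oneAxisTwisted N θ)

/-! ### Auxiliary material -/

abbrev QM := Matrix (Fin 2) (Fin 2) ℂ

/-- Tensor product of single-site 2×2 matrices. -/
def tp {N : ℕ} (M : Fin N → QM) : Matrix (Fin N → Fin 2) (Fin N → Fin 2) ℂ :=
  Matrix.of fun s t => ∏ j, M j (s j) (t j)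

lemma tp_mul {N : ℕ} (M M' : Fin N → QM) :
    tp M * tp M' = tp (fun j => M j * M' j) := by
  ext s t
  simp only [tp, Matrix.mul_apply, Matrix.of_apply]
  rw [Fintype.prod_sum (fun j x => M j (s j) x * M' j x (t j))]
  exact Finset.sum_congr rfl fun u _ => by rw [Finset.prod_mul_distrib]

lemma tp_one {N : ℕ} : tp (fun _ : Fin N => (1 : QM)) = 1 := by
  ext s t
  simp only [tp, Matrix.of_apply, Matrix.one_apply]
  by_cases h : s = t
  · subst h; simp
  · rw [if_neg h]
    obtain ⟨j, hj⟩ : ∃ j, s j ≠ t j := by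
      by_contra hc; push_neg at hc; exact h (funext hc)
    exact Finset.prod_eq_zero (Finset.mem_univ j) (by simp [hj])

lemma tp_congr {N : ℕ} {M M' : Fin N → QM} (h : ∀ j, M j = M' j) : tp M = tp M' := by
  simp only [tp]; congr 1; ext s t; exact Finset.prod_congr rfl fun j _ => by rw [h j]

lemma tp_comm {N : ℕ} {M M' : Fin N → QM} (h : ∀ j, Commute (M j) (M' j)) :
    Commute (tp M) (tp M') := by
  unfold Commute SemiconjBy
  rw [tp_mul, tp_mul]
  exact tp_congr fun j => h j

lemma tp_neg_of {N : ℕ} (M M' : Fin N → QM) (k : Fin N) (h1 : M k = -(M' k))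
    (h2 : ∀ j, j ≠ k → M j = M' j) : tp M = -(tp M') := by
  ext s t
  simp only [tp, Matrix.of_apply, Matrix.neg_apply]
  rw [← Finset.mul_prod_erase univ _ (Finset.mem_univ k),
    ← Finset.mul_prod_erase univ (fun j => M' j (s j) (t j)) (Finset.mem_univ k), h1]
  rw [Matrix.neg_apply, neg_mul]
  congr 2
  exact Finset.prod_congr rfl fun j hj => by rw [h2 j (Finset.ne_of_mem_erase hj)]

lemma tp_conjTranspose {N : ℕ} (M : Fin N → QM) (h : ∀ j, (M j)ᴴ = M j) :
    (tp M)ᴴ = tp M := by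
  ext s t
  simp only [tp, Matrix.conjTranspose_apply, Matrix.of_apply, star_prod]
  exact Finset.prod_congr rfl fun j _ => by
    rw [← Matrix.conjTranspose_apply, h j]

lemma siteOp_tp (N : ℕ) (k : Fin N) (m : QM) :
    siteOp N k m = tp (Function.update (fun _ => (1 : QM)) k m) := by
  ext s t
  simp only [siteOp, tp, Matrix.of_apply]
  rw [← Finset.mul_prod_erase univ
    (fun j => Function.update (fun _ => (1 : QM)) k m j (s j) (t j)) (Finset.mem_univ k)]
  rw [Function.update_self]
  congr 1
  refine Finset.prod_congr rfl fun j hj => ?_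
  rw [Function.update_of_ne (Finset.ne_of_mem_erase hj), Matrix.one_apply]


lemma pXX : pauliX * pauliX = 1 := by
  ext i j; fin_cases i <;> fin_cases j <;>
    simp [pauliX, Matrix.mul_apply, Fin.sum_univ_two, Matrix.one_apply]

lemma pZZ : pauliZ * pauliZ = 1 := by
  ext i j; fin_cases i <;> fin_cases j <;>
    simp [pauliZ, Matrix.mul_apply, Fin.sum_univ_two, Matrix.one_apply]

lemma pZXZ : pauliZ * (pauliX * pauliZ) = -pauliX := by
  ext i j; fin_cases i <;> fin_cases j <;>
    simp [pauliX, pauliZ, Matrix.mul_apply, Fin.sum_univ_two]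

lemma pX_apply (a b : Fin 2) : pauliX a b = if b = 1 - a then 1 else 0 := by
  fin_cases a <;> fin_cases b <;> simp [pauliX]

lemma pX_conjT : pauliXᴴ = pauliX := by
  ext i j; fin_cases i <;> fin_cases j <;> simp [pauliX]


/-- exp of a scaled idempotent. -/
lemma exp_smul_idem {A : Type*} [NormedRing A] [NormedAlgebra ℂ A] [CompleteSpace A]
    (z : ℂ) (Q : A) (hQ : Q * Q = Q) :
    NormedSpace.exp (z • Q) = 1 + (Complex.exp z - 1) • Q := by
  have hpow : ∀ n : ℕ, Q ^ (n + 1) = Q := by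
    intro n; induction n with
    | zero => simp
    | succ n ih => rw [pow_succ, ih, hQ]
  have hsum : Summable fun n : ℕ => ((n !⁻¹ : ℂ)) • (z • Q) ^ n :=
    NormedSpace.expSeries_summable' (𝕂 := ℂ) (z • Q)
  have hterm : ∀ n : ℕ, ((n !⁻¹ : ℂ)) • (z • Q) ^ n = ((n !⁻¹ : ℂ) * z ^ n) • Q ^ n := by
    intro n; rw [smul_pow, smul_smul]
  have hz : Summable fun n : ℕ => (n !⁻¹ : ℂ) * z ^ n := by
    simpa [smul_eq_mul] using NormedSpace.expSeries_summable' (𝕂 := ℂ) (𝔸 := ℂ) z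
  have hz1 : Summable fun n : ℕ => ((n + 1)!⁻¹ : ℂ) * z ^ (n + 1) :=
    (summable_nat_add_iff 1).2 hz
  rw [NormedSpace.exp_eq_tsum ℂ]
  calc ∑' n : ℕ, ((n !⁻¹ : ℂ)) • (z • Q) ^ n
      = ∑' n : ℕ, ((n !⁻¹ : ℂ) * z ^ n) • Q ^ n := tsum_congr hterm
    _ = ((0!⁻¹ : ℂ) * z ^ 0) • Q ^ 0 + ∑' n : ℕ, (((n+1)!⁻¹ : ℂ) * z ^ (n+1)) • Q ^ (n+1) := by
        refine Summable.tsum_eq_zero_add ?_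
        exact (hsum.congr hterm).congr (fun n => rfl)
    _ = 1 + (∑' n : ℕ, ((n+1)!⁻¹ : ℂ) * z ^ (n+1)) • Q := by
        simp only [hpow, pow_zero]
        rw [Summable.tsum_smul_const hz1]
        norm_num
    _ = 1 + (Complex.exp z - 1) • Q := by
        congr 2
        have he : Complex.exp z = ∑' n : ℕ, (n !⁻¹ : ℂ) * z ^ n := by
          rw [Complex.exp_eq_exp_ℂ, NormedSpace.exp_eq_tsum ℂ]
          simp [smul_eq_mul]
        have := Summable.tsum_eq_zero_add (f := fun n : ℕ => (n !⁻¹ : ℂ) * z ^ n) hz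
        rw [he, this]
        norm_num


lemma Matrix.exp_smul_invol {m : Type*} [Fintype m] [DecidableEq m]
    (lam : ℝ) (P : Matrix m m ℂ) (hP : P * P = 1) :
    NormedSpace.exp (((lam : ℂ) * Complex.I) • P) =
      (Real.cos lam : ℂ) • (1 : Matrix m m ℂ) + ((Real.sin lam : ℂ) * Complex.I) • P := by
  letI : SeminormedRing (Matrix m m ℂ) := Matrix.linftyOpSemiNormedRing
  letI : NormedRing (Matrix m m ℂ) := Matrix.linftyOpNormedRing
  letI : NormedAlgebra ℂ (Matrix m m ℂ) := Matrix.linftyOpNormedAlgebra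
  set z : ℂ := (lam : ℂ) * Complex.I with hzdef
  set Q : Matrix m m ℂ := (2⁻¹ : ℂ) • (1 + P) with hQdef
  have hQQ : Q * Q = Q := by
    have h1 : (1 + P) * (1 + P) = (2 : ℂ) • (1 + P) := by
      rw [add_mul, mul_add, mul_add, hP, one_mul, mul_one, one_mul]
      module
    rw [hQdef, smul_mul_assoc, mul_smul_comm, h1, smul_smul, smul_smul]
    norm_num
  have hsplit : z • P = ((2 : ℂ) * z) • Q + (-z) • (1 : Matrix m m ℂ) := by
    rw [hQdef, smul_smul]
    module
  have hcomm : Commute (((2 : ℂ) * z) • Q) ((-z) • (1 : Matrix m m ℂ)) :=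
    ((Commute.one_right (((2 : ℂ) * z) • Q)).smul_right (-z))
  rw [hsplit, Matrix.exp_add_of_commute _ _ hcomm]
  have h1 : NormedSpace.exp (((2 : ℂ) * z) • Q) = 1 + (Complex.exp ((2:ℂ) * z) - 1) • Q :=
    exp_smul_idem _ _ hQQ
  have h2 : NormedSpace.exp ((-z) • (1 : Matrix m m ℂ)) = Complex.exp (-z) • 1 := by
    rw [← Algebra.algebraMap_eq_smul_one, ← Algebra.algebraMap_eq_smul_one, Complex.exp_eq_exp_ℂ]
    exact (NormedSpace.algebraMap_exp_comm (-z)).symm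
  rw [h1, h2]
  -- scalar identities
  have hzz : Complex.exp z * Complex.exp (-z) = 1 := by
    rw [← Complex.exp_add]; simp
  have hA : Complex.exp z = (Real.cos lam : ℂ) + (Real.sin lam : ℂ) * Complex.I := by
    rw [hzdef, Complex.exp_mul_I, Complex.ofReal_cos, Complex.ofReal_sin]
  have hB : Complex.exp (-z) = (Real.cos lam : ℂ) - (Real.sin lam : ℂ) * Complex.I := by
    have : -z = ((-lam : ℝ) : ℂ) * Complex.I := by push_cast; ring
    rw [this, Complex.exp_mul_I]
    push_cast
    rw [Complex.cos_neg, Complex.sin_neg]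
    ring
  have hc2 : (Complex.exp ((2:ℂ) * z) - 1) * Complex.exp (-z) * 2⁻¹
      = (Real.sin lam : ℂ) * Complex.I := by
    rw [two_mul, Complex.exp_add]
    linear_combination (Complex.exp z * 2⁻¹) * hzz + (2⁻¹ : ℂ) * hA - (2⁻¹ : ℂ) * hB
  have hc1 : Complex.exp (-z) + (Complex.exp ((2:ℂ) * z) - 1) * Complex.exp (-z) * 2⁻¹
      = (Real.cos lam : ℂ) := by
    linear_combination hc2 + hB
  calc (1 + (Complex.exp ((2:ℂ) * z) - 1) • Q) * (Complex.exp (-z) • 1)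
      = (Complex.exp (-z) + (Complex.exp ((2:ℂ)*z) - 1) * Complex.exp (-z) * 2⁻¹) • 1
        + ((Complex.exp ((2:ℂ)*z) - 1) * Complex.exp (-z) * 2⁻¹) • P := by
        rw [hQdef]
        rw [add_mul, one_mul, smul_mul_assoc, smul_mul_assoc, mul_smul_comm, mul_one]
        rw [smul_add, smul_smul]
        module
    _ = (Real.cos lam : ℂ) • 1 + ((Real.sin lam : ℂ) * Complex.I) • P := by
        rw [hc1, hc2]


/-- update of the constant-1 family -/
def upd {N : ℕ} (k : Fin N) (m : QM) : Fin N → QM :=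
  Function.update (fun _ => (1 : QM)) k m

lemma upd_self {N : ℕ} (k : Fin N) (m : QM) : upd k m k = m := by
  unfold upd; simp

lemma upd_ne {N : ℕ} {j k : Fin N} (h : j ≠ k) (m : QM) : upd k m j = 1 := by
  unfold upd; simp [h]

def tpX {N : ℕ} (k : Fin N) : Matrix (Fin N → Fin 2) (Fin N → Fin 2) ℂ := tp (upd k pauliX)
def tpZ {N : ℕ} (k : Fin N) : Matrix (Fin N → Fin 2) (Fin N → Fin 2) ℂ := tp (upd k pauliZ)

lemma X_comm {N : ℕ} (k l : Fin N) : Commute (tpX k) (tpX l) := by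
  refine tp_comm fun j => ?_
  by_cases h1 : j = k <;> by_cases h2 : j = l
  · subst h1; subst h2; exact Commute.refl _
  · subst h1; rw [upd_ne h2]; exact Commute.one_right _
  · subst h2; rw [upd_ne h1]; exact Commute.one_left _
  · rw [upd_ne h1, upd_ne h2]

lemma X_mul_self {N : ℕ} (k : Fin N) : tpX k * tpX k = 1 := by
  rw [tpX, tp_mul, ← tp_one]
  refine tp_congr fun j => ?_
  by_cases h : j = k
  · subst h; rw [upd_self, pXX]
  · rw [upd_ne h, one_mul]

lemma Z_mul_self {N : ℕ} (k : Fin N) : tpZ k * tpZ k = 1 := by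
  rw [tpZ, tp_mul, ← tp_one]
  refine tp_congr fun j => ?_
  by_cases h : j = k
  · subst h; rw [upd_self, pZZ]
  · rw [upd_ne h, one_mul]

lemma X_herm {N : ℕ} (k : Fin N) : (tpX k)ᴴ = tpX k := by
  refine tp_conjTranspose _ fun j => ?_
  by_cases h : j = k
  · subst h; rw [upd_self]; exact pX_conjT
  · rw [upd_ne h]; exact Matrix.conjTranspose_one

lemma ZXZ_ne {N : ℕ} {k0 k : Fin N} (h : k ≠ k0) : tpZ k0 * tpX k * tpZ k0 = tpX k := by
  rw [tpZ, tpX, tp_mul, tp_mul]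
  refine tp_congr fun j => ?_
  by_cases h1 : j = k0
  · subst h1
    rw [upd_self, upd_ne (Ne.symm h), mul_one, pZZ]
  · by_cases h2 : j = k
    · subst h2
      rw [upd_ne h1, upd_self, one_mul, mul_one]
    · rw [upd_ne h1, upd_ne h2, one_mul, mul_one]

lemma ZXZ_eq {N : ℕ} (k0 : Fin N) : tpZ k0 * tpX k0 * tpZ k0 = -(tpX k0) := by
  rw [tpZ, tpX, tp_mul, tp_mul]
  refine tp_neg_of _ (upd k0 pauliX) k0 ?_ fun j hj => ?_
  · rw [upd_self, upd_self, mul_assoc, pZXZ]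
  · rw [upd_ne hj, one_mul, mul_one]

/-- product of indicators is indicator of equality of functions -/
lemma prod_ind {N : ℕ} (f g : Fin N → Fin 2) :
    (∏ j, if f j = g j then (1 : ℂ) else 0) = if f = g then 1 else 0 := by
  by_cases h : f = g
  · subst h; simp
  · rw [if_neg h]
    obtain ⟨j, hj⟩ : ∃ j, f j ≠ g j := by
      by_contra hc; push_neg at hc; exact h (funext hc)
    exact Finset.prod_eq_zero (Finset.mem_univ j) (by simp [hj])

/-- flip spins at positions `k` and `k0` -/
def flipk {N : ℕ} (k k0 : Fin N) (t : Fin N → Fin 2) : Fin N → Fin 2 :=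
  fun j => if j = k ∨ j = k0 then 1 - t j else t j

lemma P_entry {N : ℕ} {k k0 : Fin N} (hk : k ≠ k0) (s t : Fin N → Fin 2) :
    (tpX k * tpX k0) s t = if t = flipk k k0 s then 1 else 0 := by
  rw [tpX, tpX, tp_mul, ← prod_ind t (flipk k k0 s)]
  show (∏ j, (upd k pauliX j * upd k0 pauliX j) (s j) (t j)) = _
  refine Finset.prod_congr rfl fun j _ => ?_
  by_cases h1 : j = k
  · subst h1
    rw [upd_self, upd_ne hk, mul_one, pX_apply]
    simp [flipk]
  · by_cases h2 : j = k0
    · subst h2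
      rw [upd_ne h1, upd_self, one_mul, pX_apply]
      simp [flipk]
    · rw [upd_ne h1, upd_ne h2, one_mul, Matrix.one_apply]
      simp only [flipk, eq_false h1, eq_false h2, or_self, if_false]
      exact if_congr eq_comm rfl rfl

lemma P_mulVec {N : ℕ} {k k0 : Fin N} (hk : k ≠ k0) (v : (Fin N → Fin 2) → ℂ)
    (t : Fin N → Fin 2) : ((tpX k * tpX k0) *ᵥ v) t = v (flipk k k0 t) := by
  simp only [Matrix.mulVec, dotProduct, P_entry hk, ite_mul, one_mul, zero_mul]
  simp

lemma PP {N : ℕ} {k k0 : Fin N} (hk : k ≠ k0) :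
    (tpX k * tpX k0) * (tpX k * tpX k0) = 1 := by
  rw [tpX, tpX, tp_mul, tp_mul, ← tp_one]
  refine tp_congr fun j => ?_
  by_cases h1 : j = k
  · subst h1; rw [upd_self, upd_ne hk, mul_one, pXX]
  · by_cases h2 : j = k0
    · subst h2; rw [upd_ne h1, upd_self, one_mul, pXX]
    · rw [upd_ne h1, upd_ne h2, one_mul, one_mul]



/-- For the one-axis twisted state on `N ≥ 2` qubits,
`⟨σ_z⟩ = -cos^{N-1}(θ/2)`. -/
theorem oneAxisTwisted_sigma_z (N : ℕ) (hN : 2 ≤ N) (θ : ℝ) :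
    expVal N θ (siteOp N ⟨0, by omega⟩ pauliZ) = -((Real.cos (θ / 2) : ℂ)) ^ (N - 1) := by
  have hN0 : 0 < N := by omega
  set k0 : Fin N := ⟨0, hN0⟩ with hk0def
  set lam : ℝ := θ / 2 with hlamdef
  set cb : ℂ := (lam : ℂ) * Complex.I with hcbdef
  set d : (Fin N → Fin 2) → ℂ := allDown N with hddef
  set Z : Matrix (Fin N → Fin 2) (Fin N → Fin 2) ℂ := tpZ k0 with hZdef
  have hk0eq : (⟨0, by omega⟩ : Fin N) = k0 := rfl
  have hsiteZ : siteOp N k0 pauliZ = Z := siteOp_tp N k0 pauliZ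
  have hZZ : Z * Z = 1 := Z_mul_self k0
  have hZunit : IsUnit Z := ⟨⟨Z, Z, hZZ, hZZ⟩, rfl⟩
  have hZinv : Z⁻¹ = Z := Matrix.inv_eq_right_inv hZZ
  have hJx : Jx N = (1 / 2 : ℂ) • ∑ k : Fin N, tpX k := by
    rw [Jx]; congr 1; exact Finset.sum_congr rfl fun k _ => siteOp_tp N k pauliX
  have hXcomm : ∀ k l : Fin N, Commute (tpX k) (tpX l) := fun k l => X_comm k l
  have hJXc : Commute (Jx N) (tpX k0) := by
    rw [hJx]
    exact (Commute.sum_left _ _ _ fun k _ => hXcomm k k0).smul_left _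
  set A : Matrix (Fin N → Fin 2) (Fin N → Fin 2) ℂ := Jx N * Jx N with hAdef
  have hscal : (-(θ / 2 : ℂ) * Complex.I) = -cb := by
    rw [hcbdef, hlamdef]; push_cast; ring
  set E := NormedSpace.exp ((-cb) • A) with hEdef
  have hpsi : oneAxisTwisted N θ = E *ᵥ d := by
    rw [oneAxisTwisted, hscal]
  have hJherm : (Jx N)ᴴ = Jx N := by
    rw [hJx, Matrix.conjTranspose_smul, Matrix.conjTranspose_sum]
    rw [show star (1 / 2 : ℂ) = (1 / 2 : ℂ) from by norm_num [Complex.star_def, Complex.ext_iff]]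
    congr 1
    exact Finset.sum_congr rfl fun k _ => X_herm k
  have hAherm : Aᴴ = A := by rw [hAdef, Matrix.conjTranspose_mul, hJherm]
  have hstarcb : star (-cb) = cb := by
    rw [hcbdef]
    simp [Complex.star_def, Complex.conj_I, Complex.conj_ofReal]
  have hEH : Eᴴ = NormedSpace.exp (cb • A) := by
    rw [hEdef, ← Matrix.exp_conjTranspose, Matrix.conjTranspose_smul, hstarcb, hAherm]
  have hZJZ : Z * Jx N * Z = Jx N - tpX k0 := by
    rw [hJx, mul_smul_comm, smul_mul_assoc, Finset.mul_sum, Finset.sum_mul]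
    have hsum : ∑ k : Fin N, Z * tpX k * Z
        = (∑ k : Fin N, tpX k) - (2 : ℂ) • tpX k0 := by
      rw [← Finset.add_sum_erase _ (fun k => Z * tpX k * Z) (Finset.mem_univ k0),
        ← Finset.add_sum_erase _ (fun k => tpX k) (Finset.mem_univ k0)]
      rw [show Z * tpX k0 * Z = -(tpX k0) from ZXZ_eq k0]
      rw [Finset.sum_congr rfl fun k hk =>
        show Z * tpX k * Z = tpX k from ZXZ_ne (Finset.ne_of_mem_erase hk)]
      module
    rw [hsum]
    module
  have hZAZ : Z * ((-cb) • A) * Z = (-cb) • ((Jx N - tpX k0) * (Jx N - tpX k0)) := by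
    rw [mul_smul_comm, smul_mul_assoc]
    congr 1
    have hZZ' : ∀ x : Matrix (Fin N → Fin 2) (Fin N → Fin 2) ℂ, Z * (Z * x) = x :=
      fun x => by rw [← mul_assoc, hZZ, one_mul]
    rw [← hZJZ, hAdef]
    simp only [mul_assoc, hZZ']
  have hZE : Z * E = NormedSpace.exp ((-cb) • ((Jx N - tpX k0) * (Jx N - tpX k0))) * Z := by
    have hconj := Matrix.exp_conj Z ((-cb) • A) hZunit
    rw [hZinv] at hconj
    rw [← hZAZ, hconj, ← hEdef, mul_assoc, hZZ, mul_one]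
  have hJmXc : Commute (Jx N) (Jx N - tpX k0) := (Commute.refl _).sub_right hJXc
  have hA1 : Commute A ((Jx N - tpX k0) * (Jx N - tpX k0)) :=
    (hJmXc.mul_left hJmXc).mul_right (hJmXc.mul_left hJmXc)
  have hcommE : Commute (cb • A) ((-cb) • ((Jx N - tpX k0) * (Jx N - tpX k0))) :=
    (hA1.smul_left cb).smul_right (-cb)
  have hMul : Eᴴ * (Z * E)
      = NormedSpace.exp (cb • A + (-cb) • ((Jx N - tpX k0) * (Jx N - tpX k0))) * Z := by
    rw [hEH, hZE, ← mul_assoc, ← Matrix.exp_add_of_commute _ _ hcommE]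
  have hXJ : tpX k0 * Jx N = Jx N * tpX k0 := hJXc.symm.eq
  have hsq : (Jx N - tpX k0) * (Jx N - tpX k0)
      = A - (Jx N * tpX k0 + Jx N * tpX k0) + 1 := by
    rw [sub_mul, mul_sub, mul_sub, X_mul_self k0, hXJ, hAdef]
    abel
  have hJxX : Jx N * tpX k0
      = (2⁻¹ : ℂ) • (1 + ∑ k ∈ Finset.univ.erase k0, (tpX k * tpX k0)) := by
    rw [hJx, smul_mul_assoc, Finset.sum_mul]
    rw [← Finset.add_sum_erase _ (fun k => tpX k * tpX k0) (Finset.mem_univ k0),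
      X_mul_self k0]
    norm_num
  have hexp : cb • A + (-cb) • ((Jx N - tpX k0) * (Jx N - tpX k0))
      = ∑ k ∈ Finset.univ.erase k0, cb • (tpX k * tpX k0) := by
    rw [hsq, hJxX, ← Finset.smul_sum]
    module
  have hPcomm : ∀ k l : Fin N, Commute (tpX k * tpX k0) (tpX l * tpX k0) := fun k l =>
    ((hXcomm k l).mul_right (hXcomm k k0)).mul_left ((hXcomm k0 l).mul_right (hXcomm k0 k0))
  set F : Fin N → Matrix (Fin N → Fin 2) (Fin N → Fin 2) ℂ :=
    fun k => (Real.cos lam : ℂ) • 1 + ((Real.sin lam : ℂ) * Complex.I) • (tpX k * tpX k0)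
    with hFdef
  have hFall : ∀ k l : Fin N, Commute (F k) (F l) := by
    intro k l
    rw [hFdef]
    exact ((Commute.one_left _).smul_left _).add_left
      ((((Commute.one_right _).smul_right _).add_right ((hPcomm k l).smul_right _)).smul_left _)
  have hstep : NormedSpace.exp (∑ k ∈ Finset.univ.erase k0, cb • (tpX k * tpX k0))
      = (Finset.univ.erase k0).noncommProd F (fun x _ y _ _ => hFall x y) := by
    rw [Matrix.exp_sum_of_commute (Finset.univ.erase k0)
      (fun k => cb • (tpX k * tpX k0))
      (fun x _ y _ _ => ((hPcomm x y).smul_left cb).smul_right cb)]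
    refine Finset.noncommProd_congr rfl (fun k hk => ?_) _
    rw [hcbdef]
    rw [Matrix.exp_smul_invol lam _ (PP (Finset.ne_of_mem_erase hk)), hFdef]
  -- key induction
  have hdown : ∀ j : Fin N, (fun _ : Fin N => (1 : Fin 2)) j = 1 := fun j => rfl
  have key : ∀ s : Finset (Fin N), s ⊆ Finset.univ.erase k0 →
      ∀ t : Fin N → Fin 2, (∀ j ∈ s, t j = 1) →
      ((s.noncommProd F (fun x _ y _ _ => hFall x y)) *ᵥ d) t
        = if t = (fun _ => 1) then ((Real.cos lam : ℂ)) ^ s.card else 0 := by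
    intro s
    induction s using Finset.induction_on with
    | empty =>
      intro _ t _
      rw [show (∅ : Finset (Fin N)).noncommProd F (fun x _ y _ _ => hFall x y) = 1 from
        Finset.noncommProd_empty _ _, Matrix.one_mulVec]
      simp [hddef, allDown]
    | @insert k s hk ih =>
      intro hsub t ht
      have hkk0 : k ≠ k0 := Finset.ne_of_mem_erase (hsub (Finset.mem_insert_self k s))
      have hssub : s ⊆ Finset.univ.erase k0 := fun x hx => hsub (Finset.mem_insert_of_mem hx)
      rw [show (insert k s).noncommProd F (fun x _ y _ _ => hFall x y)
          = F k * s.noncommProd F (fun x _ y _ _ => hFall x y) from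
        Finset.noncommProd_insert_of_notMem _ _ _ _ hk, ← Matrix.mulVec_mulVec]
      have hFapp : ∀ (w : (Fin N → Fin 2) → ℂ) (u : Fin N → Fin 2),
          (F k *ᵥ w) u = (Real.cos lam : ℂ) * w u
            + ((Real.sin lam : ℂ) * Complex.I) * w (flipk k k0 u) := by
        intro w u
        rw [hFdef]
        simp only [Matrix.add_mulVec, Matrix.smul_mulVec, Matrix.one_mulVec,
          Pi.add_apply, Pi.smul_apply, smul_eq_mul, P_mulVec hkk0]
      rw [hFapp]
      have htk : t k = 1 := ht k (Finset.mem_insert_self k s)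
      have hts : ∀ j ∈ s, t j = 1 := fun j hj => ht j (Finset.mem_insert_of_mem hj)
      have hflipt : ∀ j ∈ s, flipk k k0 t j = 1 := by
        intro j hj
        have hjk : j ≠ k := fun h => hk (h ▸ hj)
        have hjk0 : j ≠ k0 := Finset.ne_of_mem_erase (hssub hj)
        simp only [flipk, eq_false hjk, eq_false hjk0, or_self, if_false]
        exact hts j hj
      have hflipne : flipk k k0 t ≠ (fun _ => 1) := by
        intro h
        have h2 := congrFun h k
        simp only [flipk, true_or, if_pos, htk] at h2
        exact absurd h2 (by decide)
      rw [ih hssub t hts, ih hssub _ hflipt, if_neg hflipne,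
        Finset.card_insert_of_notMem hk]
      by_cases hteq : t = (fun _ => 1)
      · rw [if_pos hteq, if_pos hteq, pow_succ]
        ring
      · rw [if_neg hteq, if_neg hteq]
        ring
  -- evaluate Z on the all-down vector
  have hZd : Z *ᵥ d = -d := by
    ext s
    rw [hZdef, hddef]
    show ∑ t, tpZ k0 s t * allDown N t = -(allDown N s)
    simp only [allDown, mul_ite, mul_one, mul_zero]
    rw [Finset.sum_ite_eq' Finset.univ (fun _ => (1 : Fin 2)) (fun t => tpZ k0 s t),
      if_pos (Finset.mem_univ _)]
    show (∏ j, upd k0 pauliZ j (s j) 1) = -(if s = (fun _ => 1) then (1 : ℂ) else 0)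
    by_cases hs : s = (fun _ => 1)
    · rw [if_pos hs]
      subst hs
      rw [← Finset.mul_prod_erase Finset.univ _ (Finset.mem_univ k0), upd_self]
      have hrest : (∏ j ∈ Finset.univ.erase k0, upd k0 pauliZ j 1 1) = 1 :=
        Finset.prod_eq_one fun j hj => by
          rw [upd_ne (Finset.ne_of_mem_erase hj)]
          exact Matrix.one_apply_eq _
      rw [hrest, mul_one]
      norm_num [pauliZ]
    · rw [if_neg hs, neg_zero]
      obtain ⟨j0, hj0⟩ : ∃ j, s j ≠ 1 := by
        by_contra hc; push_neg at hc; exact hs (funext hc)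
      have hsj : s j0 = 0 := by
        have h2 : (s j0).val < 2 := (s j0).isLt
        have h1 : (s j0).val ≠ 1 := fun h => hj0 (Fin.ext h)
        exact Fin.ext (by omega)
      refine Finset.prod_eq_zero (Finset.mem_univ j0) ?_
      by_cases hj : j0 = k0
      · subst hj; rw [upd_self, hsj]; norm_num [pauliZ]
      · rw [upd_ne hj, hsj, Matrix.one_apply]
        exact if_neg (by decide)
  have hdot : ∀ w : (Fin N → Fin 2) → ℂ, star d ⬝ᵥ w = w (fun _ => 1) := by
    intro w
    rw [hddef]
    show ∑ t, star (allDown N t) * w t = _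
    simp only [allDown, apply_ite (star : ℂ → ℂ), star_one, star_zero, ite_mul, one_mul,
      zero_mul]
    rw [Finset.sum_ite_eq' Finset.univ (fun _ => (1 : Fin 2)) w, if_pos (Finset.mem_univ _)]
  -- assemble
  rw [show siteOp N ⟨0, by omega⟩ pauliZ = Z from hsiteZ, expVal, hpsi, Matrix.star_mulVec,
    ← Matrix.dotProduct_mulVec, Matrix.mulVec_mulVec, Matrix.mulVec_mulVec, mul_assoc, hMul,
    hexp, hstep]
  rw [← Matrix.mulVec_mulVec, hZd, Matrix.mulVec_neg, dotProduct_neg, hdot]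
  rw [key (Finset.univ.erase k0) (subset_refl _) (fun _ => 1) (fun j _ => rfl), if_pos rfl]
  rw [Finset.card_erase_of_mem (Finset.mem_univ k0), Finset.card_univ, Fintype.card_fin]

end OneAxisTwisting
end

section
/- For the N-qubit one-axis twisted state (N ≥ 2), the quantities u = ⟨σ_{1-}σ_{2-}⟩ and y = ⟨σ_{1+}σ_{2-}⟩ satisfy |u| ≥ y ≥ 0; explicitly, |u|² - y² = (1/4) sin²(θ/2) cos^{2(N-2)}(θ/2) ≥ 0. -/
/-- For the one-axis twisted state (`N ≥ 2`, `θ ∈ [0, π]`), with the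
closed-form correlators `y = ⟨σ_{1+}σ_{2-}⟩ = (1 - cos^{N-2}θ)/8` and
`u = ⟨σ_{1-}σ_{2-}⟩ = -(1 - cos^{N-2}θ)/8 - (i/2)sin(θ/2)cos^{N-2}(θ/2)`, one has
`|u| ≥ y ≥ 0` and `|u|² - y² = (1/4)sin²(θ/2)cos^{2(N-2)}(θ/2)`. -/
theorem oneAxisTwisted_u_ge_y (N : ℕ) (hN : 2 ≤ N) (θ : ℝ)
    (hθ0 : 0 ≤ θ) (hθπ : θ ≤ Real.pi) (y : ℝ) (u : ℂ)
    (hy : y = (1 - Real.cos θ ^ (N - 2)) / 8)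
    (hu : u = -((1 - (Real.cos θ : ℂ) ^ (N - 2)) / 8) -
      (Complex.I / 2) * (Real.sin (θ / 2) : ℂ) * ((Real.cos (θ / 2) : ℂ)) ^ (N - 2)) :
    ‖u‖ ^ 2 - y ^ 2 =
        (1 / 4) * Real.sin (θ / 2) ^ 2 * Real.cos (θ / 2) ^ (2 * (N - 2)) ∧
      y ≤ ‖u‖ ∧ 0 ≤ y := by
  set b : ℝ := -(Real.sin (θ/2) / 2 * Real.cos (θ/2) ^ (N-2)) with hb
  have hu2 : u = Complex.ofReal (-y) + Complex.ofReal b * Complex.I := by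
    rw [hu, hy, hb]; push_cast; ring
  have hre : u.re = -y := by rw [hu2]; simp
  have him : u.im = b := by rw [hu2]; simp
  have habs : ‖u‖ ^ 2 = u.re ^ 2 + u.im ^ 2 := by
    rw [Complex.sq_norm, Complex.normSq_apply]; ring
  have hkey : ‖u‖ ^ 2 - y ^ 2 =
      (1 / 4) * Real.sin (θ / 2) ^ 2 * Real.cos (θ / 2) ^ (2 * (N - 2)) := by
    rw [habs, hre, him, hb, pow_mul]
    ring
  have hy0 : 0 ≤ y := by
    have h1 : Real.cos θ ^ (N - 2) ≤ 1 := by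
      calc Real.cos θ ^ (N-2) ≤ |Real.cos θ ^ (N-2)| := le_abs_self _
        _ = |Real.cos θ| ^ (N-2) := (abs_pow _ _)
        _ ≤ 1 := pow_le_one₀ (abs_nonneg _) (Real.abs_cos_le_one θ)
    rw [hy]; linarith
  have hyle : y ≤ ‖u‖ := by
    have h2 : y ^ 2 ≤ ‖u‖ ^ 2 := by
      nlinarith [hkey, sq_nonneg (Real.sin (θ/2)), pow_two_nonneg (Real.cos (θ/2) ^ (N-2)), pow_mul (Real.cos (θ/2)) 2 (N-2), sq_nonneg (Real.sin (θ/2) * Real.cos (θ/2) ^ (N-2))]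
    nlinarith [norm_nonneg u, h2, hy0]
  exact ⟨hkey, hyle, hy0⟩
end
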